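/- Let w_1,...,w_N > 0 be weights and B ≤ N. In sequential weighted sampling without replacement (at each step, select an unselected index i with probability w_i divided by the sum of weights of unselected indices), the probability that a fixed index i is among the B selected indices is at least the probability that i is selected when it has the minimum weight, and in particular is at least B·w_min/(N·w_max) > 0, where w_min = min_j w_j and w_max = max_j w_j. -/

import Mathlib

open Finset

/-- Probability of drawing the ordered sample σ : Fin B ↪ Fin n under sequential weighted
sampling without replacement (Plackett–Luce): at each step an unselected index is drawn
with probability its weight over the total weight of unselected indices. -/
noncomputable def plSeqProb {n B : ℕ} (w : Fin n → ℝ) (σ : Fin B ↪ Fin n) : ℝ :=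
  ∏ k : Fin B,
    w (σ k) / ((∑ j, w j) - ∑ l ∈ Finset.univ.filter (fun l : Fin B => l < k), w (σ l))

/-- Inclusion probability of index i in a sequential weighted sample of size B. -/
noncomputable def plInclusionProb (n B : ℕ) (w : Fin n → ℝ) (i : Fin n) : ℝ :=
  ∑ σ : Fin B ↪ Fin n, if ∃ k, σ k = i then plSeqProb w σ else 0

noncomputable def plG {N : ℕ} (w : Fin N → ℝ) : ℕ → Finset (Fin N) → Fin N → ℝ
  | 0, _, _ => 0
  | B + 1, s, i =>
      w i / ∑ j ∈ s, w j +
        ∑ k ∈ s.erase i, (w k / ∑ j ∈ s, w j) * plG w B (s.erase k) i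

variable {N : ℕ}

lemma sum_pos_of_mem {w : Fin N → ℝ} (hw : ∀ j, 0 < w j) {s : Finset (Fin N)} {i : Fin N}
    (hi : i ∈ s) : 0 < ∑ j ∈ s, w j :=
  lt_of_lt_of_le (hw i) (Finset.single_le_sum (fun j _ => (hw j).le) hi)

lemma plG_nonneg (w : Fin N → ℝ) (hw : ∀ j, 0 < w j) :
    ∀ (B : ℕ) (s : Finset (Fin N)) (i : Fin N), 0 ≤ plG w B s i
  | 0, s, i => le_refl 0
  | B + 1, s, i => by
    have h0 : (0:ℝ) ≤ ∑ j ∈ s, w j := Finset.sum_nonneg fun j _ => (hw j).le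
    simp only [plG]
    refine add_nonneg (div_nonneg (hw i).le h0) (Finset.sum_nonneg fun k _ => ?_)
    exact mul_nonneg (div_nonneg (hw k).le h0) (plG_nonneg w hw B _ i)

lemma plG_le_one (w : Fin N → ℝ) (hw : ∀ j, 0 < w j) :
    ∀ (B : ℕ) (s : Finset (Fin N)) (i : Fin N), i ∈ s → plG w B s i ≤ 1
  | 0, s, i, _ => zero_le_one
  | B + 1, s, i, hi => by
    have hW : (0:ℝ) < ∑ j ∈ s, w j := sum_pos_of_mem hw hi
    simp only [plG]
    have hsum : ∑ k ∈ s.erase i, (w k / ∑ j ∈ s, w j) * plG w B (s.erase k) i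
        ≤ ∑ k ∈ s.erase i, w k / ∑ j ∈ s, w j := by
      refine Finset.sum_le_sum fun k hk => ?_
      have hik : i ∈ s.erase k :=
        Finset.mem_erase.2 ⟨(Finset.mem_erase.1 hk).1.symm , hi⟩
      calc (w k / ∑ j ∈ s, w j) * plG w B (s.erase k) i
          ≤ (w k / ∑ j ∈ s, w j) * 1 :=
            mul_le_mul_of_nonneg_left (plG_le_one w hw B _ i hik) (div_nonneg (hw k).le hW.le)
        _ = w k / ∑ j ∈ s, w j := mul_one _
    calc w i / ∑ j ∈ s, w j + ∑ k ∈ s.erase i, (w k / ∑ j ∈ s, w j) * plG w B (s.erase k) i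
        ≤ w i / ∑ j ∈ s, w j + ∑ k ∈ s.erase i, w k / ∑ j ∈ s, w j := by linarith
      _ = (w i + ∑ k ∈ s.erase i, w k) / ∑ j ∈ s, w j := by rw [add_div, Finset.sum_div]
      _ = (∑ j ∈ s, w j) / ∑ j ∈ s, w j := by rw [Finset.add_sum_erase _ _ hi]
      _ = 1 := div_self hW.ne'

lemma plG_congr (v w : Fin N → ℝ) :
    ∀ (B : ℕ) (s : Finset (Fin N)) (i : Fin N), i ∈ s → (∀ x ∈ s, v x = w x) →
      plG v B s i = plG w B s i
  | 0, s, i, _, _ => rfl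
  | B + 1, s, i, hi, hvw => by
    have hsum : ∑ j ∈ s, v j = ∑ j ∈ s, w j := Finset.sum_congr rfl hvw
    simp only [plG, hsum, hvw i hi]
    refine congrArg _ (Finset.sum_congr rfl fun k hk => ?_)
    have hks : k ∈ s := (Finset.mem_erase.1 hk).2
    have hik : i ∈ s.erase k := Finset.mem_erase.2 ⟨(Finset.mem_erase.1 hk).1.symm, hi⟩
    rw [hvw k hks, plG_congr v w B (s.erase k) i hik
      (fun x hx => hvw x (Finset.mem_of_mem_erase hx))]

/-- Monotonicity of inclusion probability in the item's own weight. -/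
lemma plG_mono_own (v w : Fin N → ℝ) (hv : ∀ j, 0 < v j) (hw : ∀ j, 0 < w j) (i : Fin N)
    (hvw : ∀ x, x ≠ i → v x = w x) (hle : v i ≤ w i) :
    ∀ (B : ℕ) (s : Finset (Fin N)), i ∈ s → plG v B s i ≤ plG w B s i
  | 0, s, _ => le_refl 0
  | B + 1, s, hi => by
    have hR0 : (0:ℝ) ≤ ∑ k ∈ s.erase i, w k :=
      Finset.sum_nonneg fun k _ => (hw k).le
    set R : ℝ := ∑ k ∈ s.erase i, w k with hR
    set C : ℝ := ∑ k ∈ s.erase i, w k * plG w B (s.erase k) i with hC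
    have hC0 : 0 ≤ C := Finset.sum_nonneg fun k _ =>
      mul_nonneg (hw k).le (plG_nonneg w hw B _ i)
    have hCR : C ≤ R := by
      refine Finset.sum_le_sum fun k hk => ?_
      have hik : i ∈ s.erase k := Finset.mem_erase.2 ⟨(Finset.mem_erase.1 hk).1.symm, hi⟩
      calc w k * plG w B (s.erase k) i ≤ w k * 1 :=
            mul_le_mul_of_nonneg_left (plG_le_one w hw B _ i hik) (hw k).le
        _ = w k := mul_one _
    have hWv : ∑ j ∈ s, v j = v i + R := by
      rw [← Finset.add_sum_erase _ _ hi, hR]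
      congr 1
      exact Finset.sum_congr rfl fun k hk => hvw k (Finset.mem_erase.1 hk).1
    have hWw : ∑ j ∈ s, w j = w i + R := by
      rw [← Finset.add_sum_erase _ _ hi, hR]
    have hWvpos : 0 < v i + R := add_pos_of_pos_of_nonneg (hv i) hR0
    have hWwpos : 0 < w i + R := add_pos_of_pos_of_nonneg (hw i) hR0
    simp only [plG, hWv, hWw]
    have step1 : ∑ k ∈ s.erase i, (v k / (v i + R)) * plG v B (s.erase k) i
        ≤ C / (v i + R) := by
      rw [hC, Finset.sum_div]
      refine Finset.sum_le_sum fun k hk => ?_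
      have hik : i ∈ s.erase k := Finset.mem_erase.2 ⟨(Finset.mem_erase.1 hk).1.symm, hi⟩
      rw [hvw k (Finset.mem_erase.1 hk).1, div_mul_eq_mul_div]
      exact (div_le_div_iff_of_pos_right hWvpos).2 (mul_le_mul_of_nonneg_left
        (plG_mono_own v w hv hw i hvw hle B (s.erase k) hik) (hw k).le)
    have key : (v i + C) / (v i + R) ≤ (w i + C) / (w i + R) := by
      rw [div_le_div_iff₀ hWvpos hWwpos]; nlinarith
    have hrhs : ∑ k ∈ s.erase i, (w k / (w i + R)) * plG w B (s.erase k) i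
        = C / (w i + R) := by
      rw [hC, Finset.sum_div]
      exact Finset.sum_congr rfl fun k hk => by rw [div_mul_eq_mul_div]
    calc v i / (v i + R) + ∑ k ∈ s.erase i, (v k / (v i + R)) * plG v B (s.erase k) i
        ≤ v i / (v i + R) + C / (v i + R) := by linarith [step1]
      _ = (v i + C) / (v i + R) := by rw [add_div]
      _ ≤ (w i + C) / (w i + R) := key
      _ = w i / (w i + R) + ∑ k ∈ s.erase i, (w k / (w i + R)) * plG w B (s.erase k) i := by
          rw [hrhs, add_div]

/-- If `u` agrees with `v` off `i` and `u i ≤ v i`, then `u i * g_v ≤ v i * g_u`: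
the inclusion probability divided by the own weight is monotone decreasing. -/
lemma plG_ratio (u v : Fin N → ℝ) (hu : ∀ j, 0 < u j) (hv : ∀ j, 0 < v j) (i : Fin N)
    (huv : ∀ x, x ≠ i → u x = v x) (hle : u i ≤ v i) :
    ∀ (B : ℕ) (s : Finset (Fin N)), i ∈ s →
      u i * plG v B s i ≤ v i * plG u B s i
  | 0, s, _ => by simp [plG]
  | B + 1, s, hi => by
    have hR0 : (0:ℝ) ≤ ∑ k ∈ s.erase i, v k :=
      Finset.sum_nonneg fun k _ => (hv k).le
    set R : ℝ := ∑ k ∈ s.erase i, v k with hR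
    have hWu : ∑ j ∈ s, u j = u i + R := by
      rw [← Finset.add_sum_erase _ _ hi, hR]
      congr 1
      exact Finset.sum_congr rfl fun k hk => huv k (Finset.mem_erase.1 hk).1
    have hWv : ∑ j ∈ s, v j = v i + R := by rw [← Finset.add_sum_erase _ _ hi, hR]
    have hWupos : 0 < u i + R := add_pos_of_pos_of_nonneg (hu i) hR0
    have hWvpos : 0 < v i + R := add_pos_of_pos_of_nonneg (hv i) hR0
    have hWle : u i + R ≤ v i + R := by linarith
    simp only [plG, hWu, hWv, mul_add, Finset.mul_sum]
    refine add_le_add ?_ (Finset.sum_le_sum fun k hk => ?_)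
    · calc u i * (v i / (v i + R)) = (u i * v i) / (v i + R) := by ring
        _ ≤ (u i * v i) / (u i + R) :=
            div_le_div_of_nonneg_left (mul_nonneg (hu i).le (hv i).le) hWupos hWle
        _ = v i * (u i / (u i + R)) := by ring
    · have hks : k ∈ s := (Finset.mem_erase.1 hk).2
      have hik : i ∈ s.erase k := Finset.mem_erase.2 ⟨(Finset.mem_erase.1 hk).1.symm, hi⟩
      have hIH := plG_ratio u v hu hv i huv hle B (s.erase k) hik
      have huk : u k = v k := huv k (Finset.mem_erase.1 hk).1
      have h1 : 0 ≤ u i * plG v B (s.erase k) i :=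
        mul_nonneg (hu i).le (plG_nonneg v hv B _ i)
      calc u i * ((v k / (v i + R)) * plG v B (s.erase k) i)
          = (v k) * ((u i * plG v B (s.erase k) i) / (v i + R)) := by ring
        _ ≤ (v k) * ((v i * plG u B (s.erase k) i) / (u i + R)) := by
            refine mul_le_mul_of_nonneg_left ?_ (hv k).le
            calc (u i * plG v B (s.erase k) i) / (v i + R)
                ≤ (u i * plG v B (s.erase k) i) / (u i + R) :=
                  div_le_div_of_nonneg_left h1 hWupos hWle
              _ ≤ (v i * plG u B (s.erase k) i) / (u i + R) :=
                  (div_le_div_iff_of_pos_right hWupos).2 hIH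
        _ = v i * ((u k / (u i + R)) * plG u B (s.erase k) i) := by rw [huk]; ring

lemma plG_relabel (w : Fin N → ℝ) (e : Equiv.Perm (Fin N)) :
    ∀ (B : ℕ) (s : Finset (Fin N)) (i : Fin N),
      plG w B (s.image e) (e i) = plG (w ∘ e) B s i
  | 0, _, _ => rfl
  | B + 1, s, i => by
    have hsum : ∑ j ∈ s.image e, w j = ∑ j ∈ s, (w ∘ e) j :=
      Finset.sum_image fun x _ y _ h => e.injective h
    have herase : (s.image e).erase (e i) = (s.erase i).image e :=
      (Finset.image_erase e.injective s i).symm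
    simp only [plG, hsum, herase]
    congr 1
    rw [Finset.sum_image (fun x _ y _ h => e.injective h)]
    refine Finset.sum_congr rfl fun k hk => ?_
    rw [← Finset.image_erase e.injective, plG_relabel w e B (s.erase k) i]
    rfl

lemma swap_mem_of_mem {s : Finset (Fin N)} {i j : Fin N} (hi : i ∈ s) (hj : j ∈ s)
    {a : Fin N} (ha : a ∈ s) : Equiv.swap i j a ∈ s := by
  rcases eq_or_ne a i with rfl | h1
  · simpa [Equiv.swap_apply_left] using hj
  rcases eq_or_ne a j with rfl | h2
  · simpa [Equiv.swap_apply_right] using hi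
  · rwa [Equiv.swap_apply_of_ne_of_ne h1 h2]

lemma swap_image_of_mem {s : Finset (Fin N)} {i j : Fin N} (hi : i ∈ s) (hj : j ∈ s) :
    s.image (Equiv.swap i j) = s := by
  apply Finset.Subset.antisymm
  · intro a ha
    obtain ⟨b, hb, rfl⟩ := Finset.mem_image.1 ha
    exact swap_mem_of_mem hi hj hb
  · intro a ha
    refine Finset.mem_image.2 ⟨Equiv.swap i j a, swap_mem_of_mem hi hj ha, ?_⟩
    exact Equiv.swap_apply_self i j a

/-- Express the probability that `j` is included when sampling from `s.erase i` through
an update of the weight at `i` and sampling from `s.erase j`. -/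
lemma plG_cross (w : Fin N → ℝ) {s : Finset (Fin N)} {i j : Fin N}
    (hij : i ≠ j) (hi : i ∈ s) (hj : j ∈ s) (B : ℕ) :
    plG w B (s.erase i) j = plG (Function.update w i (w j)) B (s.erase j) i := by
  have h1 : plG (w ∘ Equiv.swap i j) B (s.erase j) i
      = plG w B (((s.erase j)).image (Equiv.swap i j)) (Equiv.swap i j i) :=
    (plG_relabel w (Equiv.swap i j) B (s.erase j) i).symm
  have himg : (s.erase j).image (Equiv.swap i j) = s.erase i := by
    rw [Finset.image_erase (Equiv.swap i j).injective, swap_image_of_mem hi hj,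
      Equiv.swap_apply_right]
  rw [himg, Equiv.swap_apply_left] at h1
  rw [← h1]
  refine plG_congr _ _ B (s.erase j) i (Finset.mem_erase.2 ⟨hij, hi⟩) fun x hx => ?_
  rcases eq_or_ne x i with rfl | hxi
  · simp [Equiv.swap_apply_left]
  · have hxj : x ≠ j := (Finset.mem_erase.1 hx).1
    simp [Function.comp, Equiv.swap_apply_of_ne_of_ne hxi hxj, Function.update_of_ne hxi]

/-- Comparison: if `w i ≤ w j` then `w i * g(j) ≤ w j * g(i)`. -/
lemma plG_compare (w : Fin N → ℝ) (hw : ∀ j, 0 < w j) (i j : Fin N) (hij : w i ≤ w j) :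
    ∀ (B : ℕ) (s : Finset (Fin N)), i ∈ s → j ∈ s →
      w i * plG w B s j ≤ w j * plG w B s i
  | 0, s, _, _ => by simp [plG]
  | B + 1, s, hi, hj => by
    rcases eq_or_ne i j with rfl | hne
    · exact le_refl _
    have hW : (0:ℝ) < ∑ x ∈ s, w x := sum_pos_of_mem hw hi
    set W : ℝ := ∑ x ∈ s, w x with hWdef
    have hiej : i ∈ s.erase j := Finset.mem_erase.2 ⟨hne, hi⟩
    have hjei : j ∈ s.erase i := Finset.mem_erase.2 ⟨hne.symm, hj⟩
    -- split the sums
    have hsplit1 : ∑ k ∈ s.erase j, (w k / W) * plG w B (s.erase k) j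
        = (w i / W) * plG w B (s.erase i) j
          + ∑ k ∈ (s.erase j).erase i, (w k / W) * plG w B (s.erase k) j :=
      (Finset.add_sum_erase _ _ hiej).symm
    have hsplit2 : ∑ k ∈ s.erase i, (w k / W) * plG w B (s.erase k) i
        = (w j / W) * plG w B (s.erase j) i
          + ∑ k ∈ (s.erase i).erase j, (w k / W) * plG w B (s.erase k) i :=
      (Finset.add_sum_erase _ _ hjei).symm
    have hEE : (s.erase j).erase i = (s.erase i).erase j := Finset.erase_right_comm
    -- the generic terms
    have hsumle : w i * ∑ k ∈ (s.erase j).erase i, (w k / W) * plG w B (s.erase k) j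
        ≤ w j * ∑ k ∈ (s.erase j).erase i, (w k / W) * plG w B (s.erase k) i := by
      rw [Finset.mul_sum, Finset.mul_sum]
      refine Finset.sum_le_sum fun k hk => ?_
      have hki : k ≠ i := (Finset.mem_erase.1 hk).1
      have hkj : k ≠ j := (Finset.mem_erase.1 (Finset.mem_of_mem_erase hk)).1
      have hks : k ∈ s := Finset.mem_of_mem_erase (Finset.mem_of_mem_erase hk)
      have hike : i ∈ s.erase k := Finset.mem_erase.2 ⟨fun h => hki h.symm, hi⟩
      have hjke : j ∈ s.erase k := Finset.mem_erase.2 ⟨fun h => hkj h.symm, hj⟩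
      have hIH := plG_compare w hw i j hij B (s.erase k) hike hjke
      have hWk : 0 ≤ w k / W := div_nonneg (hw k).le hW.le
      calc w i * ((w k / W) * plG w B (s.erase k) j)
          = (w k / W) * (w i * plG w B (s.erase k) j) := by ring
        _ ≤ (w k / W) * (w j * plG w B (s.erase k) i) := mul_le_mul_of_nonneg_left hIH hWk
        _ = w j * ((w k / W) * plG w B (s.erase k) i) := by ring
    -- the cross terms
    have hcross : w i * ((w i / W) * plG w B (s.erase i) j)
        ≤ w j * ((w j / W) * plG w B (s.erase j) i) := by
      set v : Fin N → ℝ := Function.update w i (w j) with hvdef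
      have hv : ∀ x, 0 < v x := fun x => by
        rcases eq_or_ne x i with rfl | hxi
        · simpa [hvdef] using hw j
        · simpa [hvdef, Function.update_of_ne hxi] using hw x
      have hcr : plG w B (s.erase i) j = plG v B (s.erase j) i := plG_cross w hne hi hj B
      have huv : ∀ x, x ≠ i → w x = v x := fun x hx => by
        simp [hvdef, Function.update_of_ne hx]
      have hle2 : w i ≤ v i := by simpa [hvdef] using hij
      have hrat := plG_ratio w v hw hv i huv hle2 B (s.erase j) hiej
      -- hrat : w i * plG v B (s.erase j) i ≤ v i * plG w B (s.erase j) i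
      have hvi : v i = w j := by simp [hvdef]
      rw [hvi] at hrat
      set X : ℝ := plG v B (s.erase j) i with hX
      set Y : ℝ := plG w B (s.erase j) i with hY
      have hX0 : 0 ≤ X := plG_nonneg v hv B _ i
      have hY0 : 0 ≤ Y := plG_nonneg w hw B _ i
      rw [hcr]
      have h1 : w i * (w i * X) ≤ w i * (w j * Y) :=
        mul_le_mul_of_nonneg_left hrat (hw i).le
      have h2 : w i * (w j * Y) ≤ w j * (w j * Y) :=
        mul_le_mul_of_nonneg_right hij (mul_nonneg (hw j).le hY0)
      have hnum : w i * w i * X ≤ w j * w j * Y := by nlinarith [h1, h2]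
      calc w i * ((w i / W) * X) = (w i * w i * X) / W := by ring
        _ ≤ (w j * w j * Y) / W := (div_le_div_iff_of_pos_right hW).2 hnum
        _ = w j * ((w j / W) * Y) := by ring
    have hhead : w i * (w j / W) = w j * (w i / W) := by ring
    rw [hEE] at hsumle hsplit1
    simp only [plG]
    rw [← hWdef, hsplit1, hsplit2, mul_add, mul_add, mul_add, mul_add]
    linarith [hsumle, hcross, hhead]

/-- If `w j ≤ w i` then the inclusion probability of `j` is at most that of `i`. -/
lemma plG_le_of_le (w : Fin N → ℝ) (hw : ∀ j, 0 < w j) (i j : Fin N) (hij : w j ≤ w i) :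
    ∀ (B : ℕ) (s : Finset (Fin N)), i ∈ s → j ∈ s →
      plG w B s j ≤ plG w B s i
  | 0, s, _, _ => le_refl _
  | B + 1, s, hi, hj => by
    rcases eq_or_ne i j with rfl | hne
    · exact le_refl _
    have hW : (0:ℝ) < ∑ x ∈ s, w x := sum_pos_of_mem hw hi
    set W : ℝ := ∑ x ∈ s, w x with hWdef
    have hiej : i ∈ s.erase j := Finset.mem_erase.2 ⟨hne, hi⟩
    have hjei : j ∈ s.erase i := Finset.mem_erase.2 ⟨hne.symm, hj⟩
    have hsplit1 : ∑ k ∈ s.erase j, (w k / W) * plG w B (s.erase k) j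
        = (w i / W) * plG w B (s.erase i) j
          + ∑ k ∈ (s.erase i).erase j, (w k / W) * plG w B (s.erase k) j := by
      rw [← Finset.erase_right_comm]
      exact (Finset.add_sum_erase _ _ hiej).symm
    have hsplit2 : ∑ k ∈ s.erase i, (w k / W) * plG w B (s.erase k) i
        = (w j / W) * plG w B (s.erase j) i
          + ∑ k ∈ (s.erase i).erase j, (w k / W) * plG w B (s.erase k) i :=
      (Finset.add_sum_erase _ _ hjei).symm
    have hsumle : ∑ k ∈ (s.erase i).erase j, (w k / W) * plG w B (s.erase k) j
        ≤ ∑ k ∈ (s.erase i).erase j, (w k / W) * plG w B (s.erase k) i := by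
      refine Finset.sum_le_sum fun k hk => ?_
      have hki : k ≠ i := (Finset.mem_erase.1 (Finset.mem_of_mem_erase hk)).1
      have hkj : k ≠ j := (Finset.mem_erase.1 hk).1
      have hks : k ∈ s := Finset.mem_of_mem_erase (Finset.mem_of_mem_erase hk)
      have hike : i ∈ s.erase k := Finset.mem_erase.2 ⟨fun h => hki h.symm, hi⟩
      have hjke : j ∈ s.erase k := Finset.mem_erase.2 ⟨fun h => hkj h.symm, hj⟩
      exact mul_le_mul_of_nonneg_left (plG_le_of_le w hw i j hij B (s.erase k) hike hjke)
        (div_nonneg (hw k).le hW.le)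
    -- head and cross terms
    set v : Fin N → ℝ := Function.update w i (w j) with hvdef
    have hv : ∀ x, 0 < v x := fun x => by
      rcases eq_or_ne x i with rfl | hxi
      · simpa [hvdef] using hw j
      · simpa [hvdef, Function.update_of_ne hxi] using hw x
    have hcr : plG w B (s.erase i) j = plG v B (s.erase j) i := plG_cross w hne hi hj B
    set ha : ℝ := plG v B (s.erase j) i with hadef
    set hb : ℝ := plG w B (s.erase j) i with hbdef
    have hab : ha ≤ hb := by
      refine plG_mono_own v w hv hw i (fun x hx => by
        simp [hvdef, Function.update_of_ne hx]) (by simpa [hvdef] using hij) B (s.erase j) hiej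
    have ha1 : ha ≤ 1 := plG_le_one v hv B _ i hiej
    have ha0 : 0 ≤ ha := plG_nonneg v hv B _ i
    have hkey : w j + w i * ha ≤ w i + w j * hb := by
      nlinarith [mul_nonneg (sub_nonneg.2 hij) (sub_nonneg.2 ha1),
        mul_nonneg (hw j).le (sub_nonneg.2 hab)]
    have hmain : w j / W + (w i / W) * ha ≤ w i / W + (w j / W) * hb := by
      have h1 : (w j + w i * ha) / W ≤ (w i + w j * hb) / W :=
        (div_le_div_iff_of_pos_right hW).2 hkey
      calc w j / W + (w i / W) * ha = (w j + w i * ha) / W := by ring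
        _ ≤ (w i + w j * hb) / W := h1
        _ = w i / W + (w j / W) * hb := by ring
    simp only [plG]
    rw [← hWdef, hsplit1, hsplit2, hcr]
    linarith [hsumle, hmain]

/-- The inclusion probabilities over a set sum to the sample size. -/
lemma plG_sum (w : Fin N → ℝ) (hw : ∀ j, 0 < w j) :
    ∀ (B : ℕ) (s : Finset (Fin N)), B ≤ s.card →
      ∑ j ∈ s, plG w B s j = B
  | 0, s, _ => by simp [plG]
  | B + 1, s, hcard => by
    have hne : s.Nonempty := Finset.card_pos.1 (lt_of_lt_of_le (Nat.succ_pos B) hcard)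
    obtain ⟨i0, hi0⟩ := hne
    have hW : (0:ℝ) < ∑ x ∈ s, w x := sum_pos_of_mem hw hi0
    set W : ℝ := ∑ x ∈ s, w x with hWdef
    simp only [plG, ← hWdef]
    rw [Finset.sum_add_distrib]
    have h1 : ∑ j ∈ s, w j / W = 1 := by
      rw [← Finset.sum_div, ← hWdef, div_self hW.ne']
    have h2 : ∑ j ∈ s, ∑ k ∈ s.erase j, (w k / W) * plG w B (s.erase k) j
        = ∑ k ∈ s, ∑ j ∈ s.erase k, (w k / W) * plG w B (s.erase k) j := by
      calc ∑ j ∈ s, ∑ k ∈ s.erase j, (w k / W) * plG w B (s.erase k) j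
          = ∑ j ∈ s, ∑ k ∈ s, if k ≠ j then (w k / W) * plG w B (s.erase k) j else 0 := by
            refine Finset.sum_congr rfl fun j _ => ?_
            rw [← Finset.filter_ne' s j, Finset.sum_filter]
        _ = ∑ k ∈ s, ∑ j ∈ s, if k ≠ j then (w k / W) * plG w B (s.erase k) j else 0 :=
            Finset.sum_comm
        _ = ∑ k ∈ s, ∑ j ∈ s.erase k, (w k / W) * plG w B (s.erase k) j := by
            refine Finset.sum_congr rfl fun k _ => ?_
            rw [← Finset.filter_ne' s k, Finset.sum_filter]
            exact Finset.sum_congr rfl fun j _ => if_congr ne_comm rfl rfl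
    have h3 : ∀ k ∈ s, ∑ j ∈ s.erase k, (w k / W) * plG w B (s.erase k) j
        = (w k / W) * B := fun k hk => by
      rw [← Finset.mul_sum, plG_sum w hw B (s.erase k) (by
        rw [Finset.card_erase_of_mem hk]; omega)]
    rw [h1, h2, Finset.sum_congr rfl h3, ← Finset.sum_mul, ← Finset.sum_div, ← hWdef,
      div_self hW.ne', one_mul]
    push_cast
    ring

/-- Plackett–Luce probability sums written over plain functions. -/
noncomputable def plA (w : Fin N → ℝ) (B : ℕ) (s : Finset (Fin N)) (i : Fin N) : ℝ :=
  ∑ g : Fin B → Fin N,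
    if Function.Injective g ∧ (∀ k, g k ∈ s) ∧ (∃ k, g k = i) then
      ∏ k : Fin B, w (g k) /
        ((∑ j ∈ s, w j) - ∑ l ∈ Finset.univ.filter (fun l : Fin B => l < k), w (g l))
    else 0

noncomputable def plT (w : Fin N → ℝ) (B : ℕ) (s : Finset (Fin N)) : ℝ :=
  ∑ g : Fin B → Fin N,
    if Function.Injective g ∧ (∀ k, g k ∈ s) then
      ∏ k : Fin B, w (g k) /
        ((∑ j ∈ s, w j) - ∑ l ∈ Finset.univ.filter (fun l : Fin B => l < k), w (g l))
    else 0

lemma sum_fun_succ {B M : ℕ} (F : (Fin (B + 1) → Fin M) → ℝ) :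
    ∑ g : Fin (B + 1) → Fin M, F g
      = ∑ j : Fin M, ∑ g : Fin B → Fin M, F (Fin.cons j g) := by
  calc ∑ g : Fin (B + 1) → Fin M, F g
      = ∑ p : Fin M × (Fin B → Fin M), F (Fin.cons p.1 p.2) :=
        (Fintype.sum_equiv (Fin.consEquiv (fun _ => Fin M)) _ _ (fun p => rfl)).symm
    _ = ∑ j : Fin M, ∑ g : Fin B → Fin M, F (Fin.cons j g) := Fintype.sum_prod_type _

lemma filter_lt_succ_sum {B : ℕ} (w : Fin N → ℝ) (j : Fin N) (g : Fin B → Fin N) (k : Fin B) :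
    ∑ l ∈ Finset.univ.filter (fun l : Fin (B + 1) => l < k.succ), w (Fin.cons (α := fun _ => Fin N) j g l)
      = w j + ∑ l ∈ Finset.univ.filter (fun l : Fin B => l < k), w (g l) := by
  rw [Finset.sum_filter, Finset.sum_filter, Fin.sum_univ_succ]
  simp [Fin.succ_pos, Fin.succ_lt_succ_iff]

lemma prod_cons_split {B : ℕ} (w : Fin N → ℝ) (T : ℝ) (j : Fin N) (g : Fin B → Fin N) :
    (∏ k : Fin (B + 1), w (Fin.cons (α := fun _ => Fin N) j g k) /
        (T - ∑ l ∈ Finset.univ.filter (fun l : Fin (B + 1) => l < k), w (Fin.cons (α := fun _ => Fin N) j g l)))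
      = (w j / T) * ∏ k : Fin B, w (g k) /
          ((T - w j) - ∑ l ∈ Finset.univ.filter (fun l : Fin B => l < k), w (g l)) := by
  rw [Fin.prod_univ_succ]
  congr 1
  · have : Finset.univ.filter (fun l : Fin (B + 1) => l < 0) = ∅ := by
      apply Finset.filter_false_of_mem
      intro l _
      exact Fin.not_lt_zero l
    simp [this]
  · refine Finset.prod_congr rfl fun k _ => ?_
    rw [Fin.cons_succ, filter_lt_succ_sum, sub_sub]

lemma plT_eq_one (w : Fin N → ℝ) (hw : ∀ j, 0 < w j) :
    ∀ (B : ℕ) (s : Finset (Fin N)), B ≤ s.card → plT w B s = 1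
  | 0, s, _ => by
    haveI : Unique (Fin 0 → Fin N) :=
      ⟨⟨fun x => x.elim0⟩, fun f => funext fun x => x.elim0⟩
    rw [plT, Fintype.sum_unique]
    rw [if_pos ⟨fun a b _ => a.elim0, fun k => k.elim0⟩]
    simp
  | B + 1, s, hcard => by
    have hne : s.Nonempty := Finset.card_pos.1 (lt_of_lt_of_le (Nat.succ_pos B) hcard)
    obtain ⟨i0, hi0⟩ := hne
    have hW : (0:ℝ) < ∑ x ∈ s, w x := sum_pos_of_mem hw hi0
    rw [plT, sum_fun_succ]
    have hterm : ∀ j : Fin N,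
        (∑ g : Fin B → Fin N,
          if Function.Injective (Fin.cons (α := fun _ => Fin N) j g) ∧
              (∀ k, Fin.cons (α := fun _ => Fin N) j g k ∈ s) then
            ∏ k : Fin (B + 1), w (Fin.cons (α := fun _ => Fin N) j g k) /
              ((∑ x ∈ s, w x) -
                ∑ l ∈ Finset.univ.filter (fun l : Fin (B + 1) => l < k),
                  w (Fin.cons (α := fun _ => Fin N) j g l))
          else 0)
        = if j ∈ s then (w j / ∑ x ∈ s, w x) * plT w B (s.erase j) else 0 := by
      intro j
      by_cases hj : j ∈ s
      · rw [if_pos hj, plT, Finset.mul_sum]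
        refine Finset.sum_congr rfl fun g _ => ?_
        rw [mul_ite, mul_zero]
        have hcond : (Function.Injective (Fin.cons (α := fun _ => Fin N) j g) ∧
            (∀ k, Fin.cons (α := fun _ => Fin N) j g k ∈ s))
            ↔ (Function.Injective g ∧ ∀ k, g k ∈ s.erase j) := by
          rw [Fin.cons_injective_iff, Fin.forall_fin_succ]
          simp only [Fin.cons_zero, Fin.cons_succ, Set.mem_range, not_exists,
            Finset.mem_erase]
          constructor
          · rintro ⟨⟨hr, hinj⟩, _, hmem⟩
            exact ⟨hinj, fun k => ⟨fun h => hr k h, hmem k⟩⟩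
          · rintro ⟨hinj, hmem⟩
            exact ⟨⟨fun k h => (hmem k).1 h, hinj⟩, hj, fun k => (hmem k).2⟩
        have hval : (∏ k : Fin (B + 1), w (Fin.cons (α := fun _ => Fin N) j g k) /
              ((∑ x ∈ s, w x) -
                ∑ l ∈ Finset.univ.filter (fun l : Fin (B + 1) => l < k),
                  w (Fin.cons (α := fun _ => Fin N) j g l)))
            = (w j / ∑ x ∈ s, w x) *
              ∏ k : Fin B, w (g k) /
                ((∑ x ∈ s.erase j, w x) -
                  ∑ l ∈ Finset.univ.filter (fun l : Fin B => l < k), w (g l)) := by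
          rw [prod_cons_split, Finset.sum_erase_eq_sub hj]
        rw [if_congr hcond hval rfl]
      · rw [if_neg hj]
        refine Finset.sum_eq_zero fun g _ => ?_
        rw [if_neg]
        rintro ⟨-, hmem⟩
        exact hj (by simpa using hmem 0)
    rw [Finset.sum_congr rfl fun j _ => hterm j]
    rw [Finset.sum_ite_mem, Finset.univ_inter]
    have : ∀ j ∈ s, (w j / ∑ x ∈ s, w x) * plT w B (s.erase j)
        = w j / ∑ x ∈ s, w x := fun j hj => by
      rw [plT_eq_one w hw B (s.erase j) (by rw [Finset.card_erase_of_mem hj]; omega), mul_one]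
    rw [Finset.sum_congr rfl this, ← Finset.sum_div, div_self hW.ne']

lemma plA_eq_plG (w : Fin N → ℝ) (hw : ∀ j, 0 < w j) :
    ∀ (B : ℕ) (s : Finset (Fin N)) (i : Fin N), i ∈ s → B ≤ s.card →
      plA w B s i = plG w B s i
  | 0, s, i, _, _ => by
    rw [plA]
    refine Finset.sum_eq_zero fun g _ => if_neg ?_
    rintro ⟨-, -, ⟨k, -⟩⟩
    exact k.elim0
  | B + 1, s, i, hi, hcard => by
    have hW : (0:ℝ) < ∑ x ∈ s, w x := sum_pos_of_mem hw hi
    rw [plA, sum_fun_succ]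
    have hterm : ∀ j : Fin N,
        (∑ g : Fin B → Fin N,
          if Function.Injective (Fin.cons (α := fun _ => Fin N) j g) ∧
              (∀ k, Fin.cons (α := fun _ => Fin N) j g k ∈ s) ∧
              (∃ k, Fin.cons (α := fun _ => Fin N) j g k = i) then
            ∏ k : Fin (B + 1), w (Fin.cons (α := fun _ => Fin N) j g k) /
              ((∑ x ∈ s, w x) -
                ∑ l ∈ Finset.univ.filter (fun l : Fin (B + 1) => l < k),
                  w (Fin.cons (α := fun _ => Fin N) j g l))
          else 0)
        = if j ∈ s then (w j / ∑ x ∈ s, w x) *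
            (if j = i then plT w B (s.erase j) else plA w B (s.erase j) i) else 0 := by
      intro j
      by_cases hj : j ∈ s
      · rw [if_pos hj]
        by_cases hji : j = i
        · subst hji
          rw [if_pos rfl, plT, Finset.mul_sum]
          refine Finset.sum_congr rfl fun g _ => ?_
          rw [mul_ite, mul_zero]
          have hcond : (Function.Injective (Fin.cons (α := fun _ => Fin N) j g) ∧
              (∀ k, Fin.cons (α := fun _ => Fin N) j g k ∈ s) ∧
              (∃ k, Fin.cons (α := fun _ => Fin N) j g k = j))
              ↔ (Function.Injective g ∧ ∀ k, g k ∈ s.erase j) := by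
            rw [Fin.cons_injective_iff, Fin.forall_fin_succ]
            simp only [Fin.cons_zero, Fin.cons_succ, Set.mem_range, not_exists,
              Finset.mem_erase]
            constructor
            · rintro ⟨⟨hr, hinj⟩, ⟨-, hmem⟩, -⟩
              exact ⟨hinj, fun k => ⟨fun h => hr k h, hmem k⟩⟩
            · rintro ⟨hinj, hmem⟩
              exact ⟨⟨fun k h => (hmem k).1 h, hinj⟩, ⟨hj, fun k => (hmem k).2⟩,
                ⟨0, rfl⟩⟩
          have hval : (∏ k : Fin (B + 1), w (Fin.cons (α := fun _ => Fin N) j g k) /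
                ((∑ x ∈ s, w x) -
                  ∑ l ∈ Finset.univ.filter (fun l : Fin (B + 1) => l < k),
                    w (Fin.cons (α := fun _ => Fin N) j g l)))
              = (w j / ∑ x ∈ s, w x) *
                ∏ k : Fin B, w (g k) /
                  ((∑ x ∈ s.erase j, w x) -
                    ∑ l ∈ Finset.univ.filter (fun l : Fin B => l < k), w (g l)) := by
            rw [prod_cons_split, Finset.sum_erase_eq_sub hj]
          rw [if_congr hcond hval rfl]
        · rw [if_neg hji, plA, Finset.mul_sum]
          refine Finset.sum_congr rfl fun g _ => ?_
          rw [mul_ite, mul_zero]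
          have hcond : (Function.Injective (Fin.cons (α := fun _ => Fin N) j g) ∧
              (∀ k, Fin.cons (α := fun _ => Fin N) j g k ∈ s) ∧
              (∃ k, Fin.cons (α := fun _ => Fin N) j g k = i))
              ↔ (Function.Injective g ∧ (∀ k, g k ∈ s.erase j) ∧ (∃ k, g k = i)) := by
            rw [Fin.cons_injective_iff, Fin.forall_fin_succ, Fin.exists_fin_succ]
            simp only [Fin.cons_zero, Fin.cons_succ, Set.mem_range, not_exists,
              Finset.mem_erase]
            constructor
            · rintro ⟨⟨hr, hinj⟩, ⟨-, hmem⟩, hex⟩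
              refine ⟨hinj, fun k => ⟨fun h => hr k h, hmem k⟩, ?_⟩
              rcases hex with h | h
              · exact absurd h hji
              · exact h
            · rintro ⟨hinj, hmem, hex⟩
              exact ⟨⟨fun k h => (hmem k).1 h, hinj⟩, ⟨hj, fun k => (hmem k).2⟩,
                Or.inr hex⟩
          have hval : (∏ k : Fin (B + 1), w (Fin.cons (α := fun _ => Fin N) j g k) /
                ((∑ x ∈ s, w x) -
                  ∑ l ∈ Finset.univ.filter (fun l : Fin (B + 1) => l < k),
                    w (Fin.cons (α := fun _ => Fin N) j g l)))
              = (w j / ∑ x ∈ s, w x) *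
                ∏ k : Fin B, w (g k) /
                  ((∑ x ∈ s.erase j, w x) -
                    ∑ l ∈ Finset.univ.filter (fun l : Fin B => l < k), w (g l)) := by
            rw [prod_cons_split, Finset.sum_erase_eq_sub hj]
          rw [if_congr hcond hval rfl]
      · rw [if_neg hj]
        refine Finset.sum_eq_zero fun g _ => ?_
        rw [if_neg]
        rintro ⟨-, hmem, -⟩
        exact hj (by simpa using hmem 0)
    rw [Finset.sum_congr rfl fun j _ => hterm j]
    rw [Finset.sum_ite_mem, Finset.univ_inter]
    rw [← Finset.add_sum_erase _ _ hi, if_pos rfl]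
    rw [plT_eq_one w hw B (s.erase i) (by rw [Finset.card_erase_of_mem hi]; omega), mul_one]
    have hrest : ∀ j ∈ s.erase i, (w j / ∑ x ∈ s, w x) *
        (if j = i then plT w B (s.erase j) else plA w B (s.erase j) i)
        = (w j / ∑ x ∈ s, w x) * plG w B (s.erase j) i := fun j hj => by
      have hji : j ≠ i := (Finset.mem_erase.1 hj).1
      rw [if_neg hji, plA_eq_plG w hw B (s.erase j) i
        (Finset.mem_erase.2 ⟨Ne.symm hji, hi⟩)
        (by rw [Finset.card_erase_of_mem (Finset.mem_of_mem_erase hj)]; omega)]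
    rw [Finset.sum_congr rfl hrest]
    simp [plG]

lemma plInclusionProb_eq_plA (B : ℕ) (w : Fin N → ℝ) (i : Fin N) :
    plInclusionProb N B w i = plA w B Finset.univ i := by
  classical
  set F : (Fin B → Fin N) → ℝ := fun g =>
    if Function.Injective g ∧ (∀ k, g k ∈ (Finset.univ : Finset (Fin N))) ∧ (∃ k, g k = i) then
      ∏ k : Fin B, w (g k) /
        ((∑ j ∈ Finset.univ, w j) -
          ∑ l ∈ Finset.univ.filter (fun l : Fin B => l < k), w (g l))
    else 0 with hF
  have h1 : plInclusionProb N B w i = ∑ σ : Fin B ↪ Fin N, F ⇑σ := by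
    rw [plInclusionProb]
    refine Finset.sum_congr rfl fun σ _ => ?_
    have hc : (∃ k, σ k = i) ↔ (Function.Injective ⇑σ ∧
        (∀ k, σ k ∈ (Finset.univ : Finset (Fin N))) ∧ (∃ k, σ k = i)) := by
      constructor
      · intro h; exact ⟨σ.injective, fun k => Finset.mem_univ _, h⟩
      · rintro ⟨-, -, h⟩; exact h
    have hval : plSeqProb w σ = ∏ k : Fin B, w (σ k) /
        ((∑ j ∈ Finset.univ, w j) -
          ∑ l ∈ Finset.univ.filter (fun l : Fin B => l < k), w (σ l)) := rfl
    rw [hF]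
    exact if_congr hc hval rfl
  have h2 : ∑ p : {f : Fin B → Fin N // Function.Injective f}, F p.1
      = ∑ σ : Fin B ↪ Fin N, F ⇑σ :=
    Fintype.sum_equiv (Equiv.subtypeInjectiveEquivEmbedding (Fin B) (Fin N))
      (fun p => F p.1) (fun σ => F ⇑σ) (fun p => rfl)
  have h3 : ∑ g ∈ Finset.univ.filter (fun g : Fin B → Fin N => Function.Injective g), F g
      = ∑ p : {f : Fin B → Fin N // Function.Injective f}, F p.1 :=
    Finset.sum_subtype _ (by simp) F
  have h4 : ∑ g ∈ Finset.univ.filter (fun g : Fin B → Fin N => Function.Injective g), F g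
      = ∑ g : Fin B → Fin N, F g := by
    refine Finset.sum_subset (Finset.filter_subset _ _) fun g _ hg => ?_
    rw [hF]
    exact if_neg fun hcon => hg (Finset.mem_filter.2 ⟨Finset.mem_univ g, hcon.1⟩)
  rw [h1, ← h2, ← h3, h4]
  rfl

/-- In Plackett–Luce sampling without replacement with positive weights and budget B ≤ N,
each index's inclusion probability is monotone in its own weight (it is at least the
inclusion probability when the index is given the minimum weight), and in particular it is
at least B·w_min/(N·w_max) > 0. -/
theorem stmt_19 (N B : ℕ) (hB : 1 ≤ B) (hBN : B ≤ N)
    (w : Fin N → ℝ) (hw : ∀ j, 0 < w j) (i : Fin N)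
    (wmin wmax : ℝ)
    (hmin : wmin = Finset.univ.inf' (Finset.univ_nonempty_iff.mpr
      ⟨i⟩) w)
    (hmax : wmax = Finset.univ.sup' (Finset.univ_nonempty_iff.mpr
      ⟨i⟩) w) :
    plInclusionProb N B (Function.update w i wmin) i ≤ plInclusionProb N B w i ∧
    (B : ℝ) * wmin / (N * wmax) ≤ plInclusionProb N B w i ∧
    0 < (B : ℝ) * wmin / (N * wmax) := by
  have hNpos : 0 < N := lt_of_lt_of_le hB hBN
  have hcard : (Finset.univ : Finset (Fin N)).card = N := by
    rw [Finset.card_univ, Fintype.card_fin]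
  have hBcard : B ≤ (Finset.univ : Finset (Fin N)).card := by rw [hcard]; exact hBN
  have hminle : ∀ j, wmin ≤ w j := fun j => by
    rw [hmin]; exact Finset.inf'_le _ (Finset.mem_univ j)
  have hlemax : ∀ j, w j ≤ wmax := fun j => by
    rw [hmax]; exact Finset.le_sup' _ (Finset.mem_univ j)
  have hminpos : 0 < wmin := by
    rw [hmin]
    exact (Finset.lt_inf'_iff _).mpr fun j _ => hw j
  have hmaxpos : 0 < wmax := lt_of_lt_of_le hminpos (le_trans (hminle i) (hlemax i))
  have hNR : (0:ℝ) < N := by exact_mod_cast hNpos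
  have hBR : (0:ℝ) < B := by exact_mod_cast hB
  -- positivity
  have hpos : 0 < (B : ℝ) * wmin / (N * wmax) :=
    div_pos (mul_pos hBR hminpos) (mul_pos hNR hmaxpos)
  -- monotonicity conjunct
  set v : Fin N → ℝ := Function.update w i wmin with hvdef
  have hv : ∀ j, 0 < v j := fun j => by
    rcases eq_or_ne j i with rfl | hj
    · simpa [hvdef] using hminpos
    · simpa [hvdef, Function.update_of_ne hj] using hw j
  have hmono : plInclusionProb N B v i ≤ plInclusionProb N B w i := by
    rw [plInclusionProb_eq_plA, plInclusionProb_eq_plA,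
      plA_eq_plG v hv B Finset.univ i (Finset.mem_univ i) hBcard,
      plA_eq_plG w hw B Finset.univ i (Finset.mem_univ i) hBcard]
    exact plG_mono_own v w hv hw i (fun x hx => by simp [hvdef, Function.update_of_ne hx])
      (by simpa [hvdef] using hminle i) B Finset.univ (Finset.mem_univ i)
  -- lower bound conjunct
  have hPg : plInclusionProb N B w i = plG w B Finset.univ i := by
    rw [plInclusionProb_eq_plA, plA_eq_plG w hw B Finset.univ i (Finset.mem_univ i) hBcard]
  have hkey : ∀ j : Fin N, wmin * plG w B Finset.univ j ≤ wmax * plG w B Finset.univ i := by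
    intro j
    rcases le_total (w i) (w j) with hij | hij
    · have h := plG_compare w hw i j hij B Finset.univ (Finset.mem_univ i) (Finset.mem_univ j)
      calc wmin * plG w B Finset.univ j ≤ w i * plG w B Finset.univ j :=
            mul_le_mul_of_nonneg_right (hminle i) (plG_nonneg w hw B _ j)
        _ ≤ w j * plG w B Finset.univ i := h
        _ ≤ wmax * plG w B Finset.univ i :=
            mul_le_mul_of_nonneg_right (hlemax j) (plG_nonneg w hw B _ i)
    · have h := plG_le_of_le w hw i j hij B Finset.univ (Finset.mem_univ i) (Finset.mem_univ j)
      calc wmin * plG w B Finset.univ j ≤ wmin * plG w B Finset.univ i :=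
            mul_le_mul_of_nonneg_left h hminpos.le
        _ ≤ wmax * plG w B Finset.univ i :=
            mul_le_mul_of_nonneg_right (le_trans (hminle i) (hlemax i))
              (plG_nonneg w hw B _ i)
  have hsum := plG_sum w hw B Finset.univ hBcard
  have hsumineq : wmin * (B : ℝ) ≤ (N : ℝ) * (wmax * plG w B Finset.univ i) := by
    calc wmin * (B : ℝ) = wmin * ∑ j ∈ Finset.univ, plG w B Finset.univ j := by rw [hsum]
      _ = ∑ j ∈ Finset.univ, wmin * plG w B Finset.univ j := Finset.mul_sum _ _ _
      _ ≤ ∑ j ∈ Finset.univ, wmax * plG w B Finset.univ i := Finset.sum_le_sum fun j _ => hkey j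
      _ = (Finset.univ : Finset (Fin N)).card • (wmax * plG w B Finset.univ i) :=
          Finset.sum_const _
      _ = (N : ℝ) * (wmax * plG w B Finset.univ i) := by
          rw [hcard, nsmul_eq_mul]
  have hlb : (B : ℝ) * wmin / (N * wmax) ≤ plInclusionProb N B w i := by
    rw [hPg, div_le_iff₀ (mul_pos hNR hmaxpos)]
    nlinarith [hsumineq]
  exact ⟨hmono, hlb, hpos⟩
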